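/- Let S be a commutative monoid with identity e, and let f : S × S → ℂ be the generalized Laplace transform of a compactly supported complex regular Borel measure μ on the space S' of nonzero multiplicative functions S → ℂ (with the topology of pointwise convergence), i.e. f(s,t) = ∫ ρ(s)·conj(ρ(t)) dμ(ρ). If f(e,e) ≠ 0 and f(e,e)·f(s,t) = f(s,e)·f(e,t) for all (s,t) ∈ S × S, then there exist c ∈ ℂ \ {0} and γ ∈ S' such that f(s,t) = c·γ(s)·conj(γ(t)) for all s, t ∈ S. -/

import Mathlib

open MeasureTheory Complex

/-- The space of nonzero multiplicative complex-valued functions on a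
commutative monoid `S`, with the topology of pointwise convergence
(subspace of the product topology on `S → ℂ`). -/
abbrev MultChar (S : Type*) [CommMonoid S] : Type _ :=
  {ρ : S → ℂ // (∀ s t : S, ρ (s * t) = ρ s * ρ t) ∧ ρ ≠ 0}

namespace Maserick

open Metric intervalIntegral




variable {Ω : Type*} [MeasurableSpace Ω] (P : Measure Ω) [IsFiniteMeasure P]

noncomputable def TT (y ζ : Ω → ℂ) (v : ℂ) : ℂ := ∫ ω, ζ ω * Complex.exp (v * y ω) ∂P

variable {P}

lemma integrable_bdd {φ : Ω → ℂ} {C : ℝ} (hm : AEStronglyMeasurable φ P)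
    (hb : ∀ᵐ ω ∂P, ‖φ ω‖ ≤ C) : Integrable φ P :=
  Integrable.mono' (integrable_const C) hm hb

lemma TT_integrand_meas {y ζ : Ω → ℂ} (hy : Measurable y) (hζ : Measurable ζ) (v : ℂ) :
    Measurable fun ω => ζ ω * Complex.exp (v * y ω) :=
  hζ.mul (measurable_const.mul hy).cexp

lemma key_bound {C R A : ℝ} {zv yv v : ℂ} (hz : ‖zv‖ ≤ C) (hw : ‖yv‖ ≤ R) (hv : ‖v‖ ≤ A) :
    ‖zv * Complex.exp (v * yv)‖ ≤ C * Real.exp (A * R) := by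
  rw [norm_mul, Complex.norm_exp]
  have h1 : (v * yv).re ≤ A * R := by
    calc (v * yv).re ≤ ‖v * yv‖ := Complex.re_le_norm _
    _ = ‖v‖ * ‖yv‖ := norm_mul _ _
    _ ≤ A * R := mul_le_mul hv hw (norm_nonneg _) (le_trans (norm_nonneg _) hv)
  exact mul_le_mul hz (Real.exp_le_exp.2 h1) (Real.exp_pos _).le
    (le_trans (norm_nonneg _) hz)

lemma TT_hasDerivAt {y ζ : Ω → ℂ} {R C : ℝ} (hy : Measurable y) (hζ : Measurable ζ)
    (hyR : ∀ᵐ ω ∂P, ‖y ω‖ ≤ R) (hζC : ∀ᵐ ω ∂P, ‖ζ ω‖ ≤ C) (v : ℂ) :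
    HasDerivAt (TT P y ζ) (TT P y (fun ω => ζ ω * y ω) v) v := by
  have key := hasDerivAt_integral_of_dominated_loc_of_deriv_le (μ := P)
    (F := fun x ω => ζ ω * Complex.exp (x * y ω))
    (F' := fun x ω => (ζ ω * y ω) * Complex.exp (x * y ω))
    (x₀ := v) (bound := fun _ => (C * R) * Real.exp ((‖v‖ + 1) * R)) (s := ball v 1) (ball_mem_nhds v one_pos)
    (Filter.Eventually.of_forall fun x => ((TT_integrand_meas hy hζ x).aestronglyMeasurable))
    (integrable_bdd (TT_integrand_meas hy hζ v).aestronglyMeasurable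
      ((hyR.and hζC).mono fun ω ⟨h1, h2⟩ => key_bound h2 h1 (le_refl _)))
    ((TT_integrand_meas hy (hζ.mul hy) v).aestronglyMeasurable)
    ?_ (integrable_const _) ?_
  · exact key.2
  · refine (hyR.and hζC).mono fun ω ⟨h1, h2⟩ x hx => ?_
    have hxA : ‖x‖ ≤ ‖v‖ + 1 := by
      have h1 := mem_ball_iff_norm.mp hx
      have h2 : ‖x‖ - ‖v‖ ≤ ‖x - v‖ := norm_sub_norm_le x v
      linarith
    have hzy : ‖ζ ω * y ω‖ ≤ C * R := by
      rw [norm_mul]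
      exact mul_le_mul h2 h1 (norm_nonneg _) (le_trans (norm_nonneg _) h2)
    exact key_bound hzy h1 hxA
  · refine Filter.Eventually.of_forall fun ω x _ => ?_
    have h := (((hasDerivAt_id x).mul_const (y ω)).cexp).const_mul (ζ ω)
    convert h using 1
    · rfl
    simp only [id_eq, one_mul]
    ring_nf
    rfl

lemma TT_differentiable {y ζ : Ω → ℂ} {R C : ℝ} (hy : Measurable y) (hζ : Measurable ζ)
    (hyR : ∀ᵐ ω ∂P, ‖y ω‖ ≤ R) (hζC : ∀ᵐ ω ∂P, ‖ζ ω‖ ≤ C) :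
    Differentiable ℂ (TT P y ζ) :=
  fun v => (TT_hasDerivAt hy hζ hyR hζC v).differentiableAt

lemma TT_deriv {y ζ : Ω → ℂ} {R C : ℝ} (hy : Measurable y) (hζ : Measurable ζ)
    (hyR : ∀ᵐ ω ∂P, ‖y ω‖ ≤ R) (hζC : ∀ᵐ ω ∂P, ‖ζ ω‖ ≤ C) :
    deriv (TT P y ζ) = TT P y (fun ω => ζ ω * y ω) :=
  funext fun v => (TT_hasDerivAt hy hζ hyR hζC v).deriv

lemma TT_iteratedDeriv {y : Ω → ℂ} {R : ℝ} (hy : Measurable y) (hyR : ∀ᵐ ω ∂P, ‖y ω‖ ≤ R) :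
    ∀ (m : ℕ) (ζ : Ω → ℂ) (C : ℝ), Measurable ζ → (∀ᵐ ω ∂P, ‖ζ ω‖ ≤ C) →
      iteratedDeriv m (TT P y ζ) = TT P y (fun ω => ζ ω * y ω ^ m) := by
  intro m
  induction m with
  | zero =>
    intro ζ C hζ hζC
    simp only [iteratedDeriv_zero, pow_zero, mul_one]
  | succ n ih =>
    intro ζ C hζ hζC
    rw [iteratedDeriv_succ', TT_deriv hy hζ hyR hζC,
      ih (fun ω => ζ ω * y ω) (C * R) (hζ.mul hy)
        ((hyR.and hζC).mono fun ω ⟨h1, h2⟩ => by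
          rw [norm_mul]
          exact mul_le_mul h2 h1 (norm_nonneg _) (le_trans (norm_nonneg _) h2))]
    have harg : (fun ω => ζ ω * y ω * y ω ^ n) = fun ω => ζ ω * y ω ^ (n + 1) := by
      funext ω; ring
    rw [harg]

lemma TT_norm_le {y ζ : Ω → ℂ} {R C : ℝ} (hyR : ∀ᵐ ω ∂P, ‖y ω‖ ≤ R)
    (hζC : ∀ᵐ ω ∂P, ‖ζ ω‖ ≤ C) (v : ℂ) :
    ‖TT P y ζ v‖ ≤ C * Real.exp (‖v‖ * R) * (P Set.univ).toReal :=
  norm_integral_le_of_norm_le_const <|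
    (hyR.and hζC).mono fun ω ⟨h1, h2⟩ => key_bound h2 h1 (le_refl _)

lemma entire_ext {f₁ f₂ : ℂ → ℂ} (h₁ : Differentiable ℂ f₁) (h₂ : Differentiable ℂ f₂)
    (h : ∀ n, iteratedDeriv n f₁ 0 = iteratedDeriv n f₂ 0) : f₁ = f₂ := by
  funext z
  rw [← taylorSeries_eq_of_entire' (c := 0) (z := z) h₁,
    ← taylorSeries_eq_of_entire' (c := 0) (z := z) h₂]
  exact tsum_congr fun n => by rw [h n]




lemma integral_exp_int (k : ℤ) (hk : k ≠ 0) :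
    (∫ θ in (0:ℝ)..(2 * Real.pi), Complex.exp (k * θ * I)) = 0 := by
  have harg : ∀ θ : ℝ, (k : ℂ) * θ * I = ((k : ℂ) * I) * θ := fun θ => by ring
  simp_rw [harg]
  rw [integral_exp_mul_complex (by simp [hk, Complex.I_ne_zero])]
  have h1 : ((k : ℂ) * I) * ((2 : ℝ) * Real.pi : ℝ) = (k : ℂ) * (2 * (Real.pi : ℂ) * I) := by
    push_cast; ring
  have h2 : exp ((k : ℂ) * (2 * (Real.pi : ℂ) * I)) = 1 := Complex.exp_int_mul_two_pi_mul_I k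
  rw [h1, h2]
  simp

lemma circle_mean_value {ψ : ℂ → ℂ} (hψ : Differentiable ℂ ψ) (c : ℂ) {R : ℝ} (hR : 0 ≤ R) :
    (∫ θ in (0:ℝ)..(2 * Real.pi), ψ (circleMap c R θ)) = (2 * Real.pi : ℝ) * ψ c := by
  rcases eq_or_lt_of_le hR with h0 | hpos
  · simp only [← h0, circleMap, Complex.ofReal_zero, zero_mul, add_zero]
    rw [intervalIntegral.integral_const]
    simp [smul_eq_mul]
  · have hd : DifferentiableOn ℂ ψ (closedBall c R) := hψ.differentiableOn
    have key := hd.circleIntegral_sub_inv_smul (w := c) (mem_ball_self hpos)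
    rw [circleIntegral] at key
    have congr1 : ∀ θ ∈ Set.uIcc (0:ℝ) (2 * Real.pi),
        deriv (circleMap c R) θ • (circleMap c R θ - c)⁻¹ • ψ (circleMap c R θ)
          = I * ψ (circleMap c R θ) := by
      intro θ _
      rw [deriv_circleMap, circleMap_sub_center, smul_eq_mul, smul_eq_mul]
      have hne : circleMap 0 R θ ≠ 0 := by
        intro h
        have := norm_circleMap_zero R θ
        rw [h] at this
        simp only [norm_zero] at this
        rw [abs_of_pos hpos] at this
        exact hpos.ne' this.symm
      field_simp
    rw [intervalIntegral.integral_congr congr1, intervalIntegral.integral_const_mul] at key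
    refine mul_left_cancel₀ Complex.I_ne_zero ?_
    rw [key, smul_eq_mul]
    push_cast
    ring

lemma circle_mean_sq {ψ : ℂ → ℂ} (hψ : Differentiable ℂ ψ) (c : ℂ) {R : ℝ} (hpos : 0 < R) :
    (∫ θ in (0:ℝ)..(2 * Real.pi), ψ (circleMap c R θ) * circleMap 0 R θ ^ 2) = 0 := by
  have hd : DifferentiableOn ℂ (fun z => ψ z * (z - c) ^ 2) (closedBall c R) :=
    (hψ.mul (Differentiable.pow (by fun_prop) 2)).differentiableOn
  have key := hd.circleIntegral_sub_inv_smul (w := c) (mem_ball_self hpos)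
  rw [circleIntegral] at key
  have congr1 : ∀ θ ∈ Set.uIcc (0:ℝ) (2 * Real.pi),
      deriv (circleMap c R) θ • (circleMap c R θ - c)⁻¹ •
        (ψ (circleMap c R θ) * (circleMap c R θ - c) ^ 2)
        = I * (ψ (circleMap c R θ) * circleMap 0 R θ ^ 2) := by
    intro θ _
    rw [deriv_circleMap, circleMap_sub_center, smul_eq_mul, smul_eq_mul]
    have hne : circleMap 0 R θ ≠ 0 := by
      intro h
      have := norm_circleMap_zero R θ
      rw [h] at this
      simp only [norm_zero] at this
      rw [abs_of_pos hpos] at this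
      exact hpos.ne' this.symm
    field_simp
  rw [intervalIntegral.integral_congr congr1, intervalIntegral.integral_const_mul] at key
  have hrhs : (2 * Real.pi * I : ℂ) • (ψ c * (c - c) ^ 2) = 0 := by simp
  rw [hrhs] at key
  exact (mul_eq_zero.mp key).resolve_left Complex.I_ne_zero

lemma hasDerivAt_conj_comp {g : ℂ → ℂ} {d w : ℂ}
    (hg : HasDerivAt g d (-((starRingEnd ℂ) w))) :
    HasDerivAt (fun z => (starRingEnd ℂ) (g (-((starRingEnd ℂ) z)))) (-((starRingEnd ℂ) d)) w := by
  rw [hasDerivAt_iff_isLittleO] at hg ⊢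
  have hτ : Filter.Tendsto (fun z : ℂ => -((starRingEnd ℂ) z)) (nhds w)
      (nhds (-((starRingEnd ℂ) w))) := by
    exact ((Complex.continuous_conj.neg).tendsto w)
  have h2 := hg.comp_tendsto hτ
  rw [Asymptotics.isLittleO_iff] at h2 ⊢
  intro ε hε
  filter_upwards [h2 hε] with z hz
  have e1 : (starRingEnd ℂ) (g (-((starRingEnd ℂ) z))) - (starRingEnd ℂ) (g (-(starRingEnd ℂ) w))
      - (z - w) • (-((starRingEnd ℂ) d))
      = (starRingEnd ℂ) (g (-((starRingEnd ℂ) z)) - g (-(starRingEnd ℂ) w)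
        - ((-((starRingEnd ℂ) z)) - (-((starRingEnd ℂ) w))) • d) := by
    simp only [smul_eq_mul, map_sub, map_mul]
    simp only [map_neg, map_sub, Complex.conj_conj]
    ring
  rw [e1, RCLike.norm_conj]
  have e2 : ‖(-((starRingEnd ℂ) z)) - (-((starRingEnd ℂ) w))‖ = ‖z - w‖ := by
    rw [show (-((starRingEnd ℂ) z)) - (-((starRingEnd ℂ) w)) = -((starRingEnd ℂ) (z - w)) by
      simp [map_sub]; ring]
    rw [norm_neg, RCLike.norm_conj]
  calc ‖g (-((starRingEnd ℂ) z)) - g (-(starRingEnd ℂ) w)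
        - ((-((starRingEnd ℂ) z)) - (-((starRingEnd ℂ) w))) • d‖
      ≤ ε * ‖(-((starRingEnd ℂ) z)) - (-((starRingEnd ℂ) w))‖ := hz
    _ = ε * ‖z - w‖ := by rw [e2]




lemma swap_integral {G : ℝ → ℝ → ℂ} (hG : Continuous (Function.uncurry G)) {b : ℝ} (hb : 0 ≤ b) :
    (∫ θ in (0:ℝ)..b, (∫ t in (0:ℝ)..1, G θ t)) = ∫ t in (0:ℝ)..1, ∫ θ in (0:ℝ)..b, G θ t := by
  obtain ⟨M, hM⟩ := (IsCompact.exists_bound_of_continuousOn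
    ((isCompact_Icc (a := (0:ℝ)) (b := b)).prod (isCompact_Icc (a := (0:ℝ)) (b := 1)))
    hG.continuousOn)
  have hint : Integrable (Function.uncurry G)
      ((volume.restrict (Set.Ioc (0:ℝ) b)).prod (volume.restrict (Set.Ioc (0:ℝ) 1))) := by
    refine Integrable.mono' (integrable_const M) hG.aestronglyMeasurable ?_
    rw [Measure.prod_restrict]
    rw [ae_restrict_iff' (measurableSet_Ioc.prod measurableSet_Ioc)]
    refine Filter.Eventually.of_forall fun p hp => ?_
    exact hM p ⟨Set.Ioc_subset_Icc_self hp.1, Set.Ioc_subset_Icc_self hp.2⟩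
  have hswap := MeasureTheory.integral_integral_swap hint
  rw [intervalIntegral.integral_of_le hb, intervalIntegral.integral_of_le (zero_le_one (α := ℝ))]
  simp_rw [intervalIntegral.integral_of_le (zero_le_one (α := ℝ)),
    intervalIntegral.integral_of_le hb]
  exact hswap

lemma interval_integral_conj {φ : ℝ → ℂ} {a b : ℝ} :
    (∫ θ in a..b, (starRingEnd ℂ) (φ θ)) = (starRingEnd ℂ) (∫ θ in a..b, φ θ) := by
  rw [intervalIntegral, intervalIntegral, integral_conj, integral_conj, map_sub]




variable {f ψ : ℂ → ℂ}

lemma exp_rep (hf : Differentiable ℂ f) (hψ : Continuous ψ)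
    (hf0 : ∀ z, f z ≠ 0) (hfψ : ∀ z, deriv f z = ψ z * f z) (z₀ z : ℂ) :
    f z = Complex.exp ((∫ t in (0:ℝ)..1, (z - z₀) * ψ (z₀ + t • (z - z₀)))
      + Complex.log (f z₀)) := by
  set c₁ := z - z₀ with hc₁
  set γ : ℝ → ℂ := fun s => z₀ + s • c₁ with hγdef
  have hγ : ∀ s : ℝ, HasDerivAt γ c₁ s := by
    intro s
    simpa [hγdef] using ((hasDerivAt_id s).smul_const c₁).const_add z₀
  have hcont : Continuous fun s : ℝ => c₁ * ψ (γ s) := by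
    apply continuous_const.mul (hψ.comp (by fun_prop))
  set u : ℝ → ℂ := fun t => ∫ s in (0:ℝ)..t, c₁ * ψ (γ s) with hudef
  have hu : ∀ t : ℝ, HasDerivAt u (c₁ * ψ (γ t)) t := by
    intro t
    exact intervalIntegral.integral_hasDerivAt_right (hcont.intervalIntegrable _ _)
      hcont.stronglyMeasurable.stronglyMeasurableAtFilter hcont.continuousAt
  set φ : ℝ → ℂ := fun t => f (γ t) * Complex.exp (-u t) with hφdef
  have hφd : ∀ t : ℝ, HasDerivAt φ 0 t := by
    intro t
    have hfγ : HasDerivAt (fun s : ℝ => f (γ s)) (c₁ • deriv f (γ t)) t :=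
      (hf.differentiableAt.hasDerivAt).scomp t (hγ t)
    have hexp : HasDerivAt (fun s : ℝ => Complex.exp (-u s))
        (Complex.exp (-u t) * (-(c₁ * ψ (γ t)))) t := ((hu t).neg).cexp
    have hprod := hfγ.mul hexp
    have hval : c₁ • deriv f (γ t) * Complex.exp (-u t)
        + f (γ t) * (Complex.exp (-u t) * (-(c₁ * ψ (γ t)))) = 0 := by
      rw [hfψ, smul_eq_mul]
      ring
    rw [hval] at hprod
    exact hprod
  have hconst : φ 1 = φ 0 :=
    is_const_of_deriv_eq_zero (fun t => (hφd t).differentiableAt)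
      (fun t => (hφd t).deriv) 1 0
  have hγ0 : γ 0 = z₀ := by simp [hγdef]
  have hγ1 : γ 1 = z := by simp [hγdef, hc₁]
  have hu0 : u 0 = 0 := by simp [hudef]
  have h1 : f z * Complex.exp (-u 1) = f z₀ := by
    have := hconst
    rw [hφdef] at this
    simpa [hγ0, hγ1, hu0] using this
  have h2 : f z = f z₀ * Complex.exp (u 1) := by
    rw [← h1, mul_assoc, ← Complex.exp_add]
    simp
  calc f z = f z₀ * Complex.exp (u 1) := h2
  _ = Complex.exp (u 1) * f z₀ := mul_comm _ _
  _ = Complex.exp (u 1) * Complex.exp (Complex.log (f z₀)) := by rw [Complex.exp_log (hf0 z₀)]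
  _ = Complex.exp (u 1 + Complex.log (f z₀)) := (Complex.exp_add _ _).symm
  _ = _ := rfl



variable {ψ : ℂ → ℂ}

lemma cm_cont (z₀ : ℂ) (r : ℝ) : Continuous fun p : ℝ × ℝ => circleMap z₀ (p.2 * r) p.1 := by
  unfold circleMap
  fun_prop

lemma cm_smul (z₀ : ℂ) (r : ℝ) (t θ : ℝ) :
    z₀ + t • circleMap 0 r θ = circleMap z₀ (t * r) θ := by
  simp only [circleMap, zero_add, real_smul]
  push_cast
  ring

lemma inner_I (hψ : Differentiable ℂ ψ) (z₀ : ℂ) {r : ℝ} (hr : 0 < r) :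
    (∫ θ in (0:ℝ)..(2*Real.pi), (∫ t in (0:ℝ)..1, (r:ℂ) * ψ (circleMap z₀ (t*r) θ)))
      = 2 * (Real.pi:ℂ) * r * ψ z₀ := by
  rw [swap_integral (by
      have := cm_cont z₀ r
      exact continuous_const.mul (hψ.continuous.comp this)) Real.two_pi_pos.le]
  have hcongr : ∀ t ∈ Set.uIcc (0:ℝ) 1,
      (∫ θ in (0:ℝ)..(2*Real.pi), (r:ℂ) * ψ (circleMap z₀ (t*r) θ))
        = (2 * Real.pi : ℝ) * ((r:ℂ) * ψ z₀) := by
    intro t ht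
    rw [Set.uIcc_of_le (zero_le_one (α := ℝ))] at ht
    rw [intervalIntegral.integral_const_mul,
      circle_mean_value hψ z₀ (mul_nonneg ht.1 hr.le)]
    push_cast
    ring
  rw [intervalIntegral.integral_congr hcongr, intervalIntegral.integral_const]
  push_cast
  simp [smul_eq_mul]
  ring

lemma inner_II (hψ : Differentiable ℂ ψ) (z₀ : ℂ) {r : ℝ} (hr : 0 < r) :
    (∫ θ in (0:ℝ)..(2*Real.pi),
      (∫ t in (0:ℝ)..1, (r:ℂ) * Complex.exp (θ*I)^2 * ψ (circleMap z₀ (t*r) θ))) = 0 := by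
  rw [swap_integral (by
      have := cm_cont z₀ r
      refine Continuous.mul (by fun_prop) (hψ.continuous.comp this)) Real.two_pi_pos.le]
  have hcongr : ∀ t ∈ Set.uIcc (0:ℝ) 1,
      (∫ θ in (0:ℝ)..(2*Real.pi), (r:ℂ) * Complex.exp (θ*I)^2 * ψ (circleMap z₀ (t*r) θ))
        = 0 := by
    intro t ht
    rw [Set.uIcc_of_le (zero_le_one (α := ℝ))] at ht
    rcases eq_or_lt_of_le (mul_nonneg ht.1 hr.le) with h0 | hpos
    · have : ∀ θ : ℝ, circleMap z₀ (t*r) θ = z₀ := by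
        intro θ; rw [← h0]; simp [circleMap]
      simp_rw [this]
      have hrw : ∀ θ : ℝ, (r:ℂ) * Complex.exp (θ*I)^2 * ψ z₀
          = ((r:ℂ) * ψ z₀) * Complex.exp (((2:ℤ):ℂ) * θ * I) := by
        intro θ
        rw [← Complex.exp_nat_mul]
        push_cast
        ring_nf
      simp_rw [hrw]
      rw [intervalIntegral.integral_const_mul, integral_exp_int 2 (by norm_num), mul_zero]
    · have hne : ((t*r : ℝ) : ℂ) ≠ 0 := by
        simp only [ne_eq, Complex.ofReal_eq_zero]
        exact hpos.ne'
      have hrw : ∀ θ : ℝ, (r:ℂ) * Complex.exp (θ*I)^2 * ψ (circleMap z₀ (t*r) θ)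
          = ((r:ℂ) / ((t*r:ℝ):ℂ)^2)
              * (ψ (circleMap z₀ (t*r) θ) * circleMap 0 (t*r) θ ^ 2) := by
        intro θ
        have hcm : circleMap 0 (t*r) θ = ((t*r:ℝ):ℂ) * Complex.exp (θ*I) := by
          simp [circleMap]
        have key : ∀ X e ps R : ℂ, X ≠ 0 →
            R * e^2 * ps = (R / X^2) * (ps * (X*e)^2) := by
          intro X e ps R hX
          field_simp
        rw [hcm]
        exact key _ _ _ _ hne
      simp_rw [hrw]
      rw [intervalIntegral.integral_const_mul, circle_mean_sq hψ z₀ hpos, mul_zero]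
  rw [intervalIntegral.integral_congr hcongr]
  simp

lemma average_rep {f : ℂ → ℂ} (hf : Differentiable ℂ f) (hψ : Differentiable ℂ ψ)
    (hf0 : ∀ z, f z ≠ 0) (hfψ : ∀ z, deriv f z = ψ z * f z) (z₀ : ℂ) {r : ℝ} (hr : 0 < r) :
    (∫ θ in (0:ℝ)..(2 * Real.pi),
        ((Real.log ‖f (circleMap z₀ r θ)‖ : ℝ) : ℂ) * Complex.exp (-(θ * I)))
      = Real.pi * r * ψ z₀ := by
  set L := Complex.log (f z₀) with hL
  set Fz : ℂ → ℂ :=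
    fun z => (∫ t in (0:ℝ)..1, (z - z₀) * ψ (z₀ + t • (z - z₀))) + L with hFzdef
  have hrep : ∀ z, f z = Complex.exp (Fz z) := fun z =>
    exp_rep hf hψ.continuous hf0 hfψ z₀ z
  have hFzcont : Continuous Fz := by
    refine Continuous.add ?_ continuous_const
    exact continuous_parametric_intervalIntegral_of_continuous' (by have := hψ.continuous; fun_prop) 0 1
  have hlog : ∀ z, ((Real.log ‖f z‖ : ℝ) : ℂ)
      = (Fz z + (starRingEnd ℂ) (Fz z)) / 2 := by
    intro z
    have h1 : ‖f z‖ = Real.exp ((Fz z).re) := by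
      rw [hrep z, Complex.norm_exp]
    rw [h1, Real.log_exp, Complex.add_conj]
    push_cast
    ring
  -- the two principal integrals
  have hcontA : Continuous fun θ : ℝ => Fz (circleMap z₀ r θ) := by
    exact hFzcont.comp (continuous_circleMap _ _)
  have hIa : (∫ θ in (0:ℝ)..(2 * Real.pi), Fz (circleMap z₀ r θ) * Complex.exp (-(θ * I)))
      = 2 * Real.pi * r * ψ z₀ := by
    have hsplit : ∀ θ ∈ Set.uIcc (0:ℝ) (2 * Real.pi),
        Fz (circleMap z₀ r θ) * Complex.exp (-(θ * I))
          = (∫ t in (0:ℝ)..1, (r:ℂ) * ψ (circleMap z₀ (t*r) θ))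
            + L * Complex.exp (((-1:ℤ):ℂ) * θ * I) := by
      intro θ _
      rw [hFzdef]
      simp only [circleMap_sub_center]
      rw [add_mul]
      congr 1
      · rw [← intervalIntegral.integral_mul_const]
        refine intervalIntegral.integral_congr fun t _ => ?_
        rw [cm_smul z₀ r t θ]
        have h2 : circleMap 0 r θ * Complex.exp (-(θ * I)) = (r:ℂ) := by
          rw [circleMap_zero, mul_assoc, ← Complex.exp_add]
          simp
        calc circleMap 0 r θ * ψ (circleMap z₀ (t * r) θ) * Complex.exp (-(θ * I))
            = (circleMap 0 r θ * Complex.exp (-(θ * I))) * ψ (circleMap z₀ (t * r) θ) := by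
              ring
          _ = (r:ℂ) * ψ (circleMap z₀ (t * r) θ) := by rw [h2]
      · congr 1
        push_cast
        ring
    rw [intervalIntegral.integral_congr hsplit, intervalIntegral.integral_add ?ia ?ib]
    · rw [intervalIntegral.integral_const_mul, integral_exp_int (-1) (by norm_num), mul_zero,
        add_zero, inner_I hψ z₀ hr]
    case ia =>
      apply Continuous.intervalIntegrable
      exact continuous_parametric_intervalIntegral_of_continuous' (by
        have := cm_cont z₀ r
        exact continuous_const.mul (hψ.continuous.comp this)) 0 1
    case ib =>
      apply Continuous.intervalIntegrable
      fun_prop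
  have hIb : (∫ θ in (0:ℝ)..(2 * Real.pi),
      (starRingEnd ℂ) (Fz (circleMap z₀ r θ)) * Complex.exp (-(θ * I))) = 0 := by
    have hconjrw : ∀ θ ∈ Set.uIcc (0:ℝ) (2 * Real.pi),
        (starRingEnd ℂ) (Fz (circleMap z₀ r θ)) * Complex.exp (-(θ * I))
          = (starRingEnd ℂ) (Fz (circleMap z₀ r θ) * Complex.exp (θ * I)) := by
      intro θ _
      rw [map_mul]
      congr 1
      rw [← Complex.exp_conj]
      congr 1
      simp [Complex.conj_ofReal]
    rw [intervalIntegral.integral_congr hconjrw, interval_integral_conj]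
    have hmain : (∫ θ in (0:ℝ)..(2 * Real.pi), Fz (circleMap z₀ r θ) * Complex.exp (θ * I))
        = 0 := by
      have hsplit : ∀ θ ∈ Set.uIcc (0:ℝ) (2 * Real.pi),
          Fz (circleMap z₀ r θ) * Complex.exp (θ * I)
            = (∫ t in (0:ℝ)..1, (r:ℂ) * Complex.exp (θ*I)^2 * ψ (circleMap z₀ (t*r) θ))
              + L * Complex.exp (((1:ℤ):ℂ) * θ * I) := by
        intro θ _
        rw [hFzdef]
        simp only [circleMap_sub_center]
        rw [add_mul]
        congr 1
        · rw [← intervalIntegral.integral_mul_const]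
          refine intervalIntegral.integral_congr fun t _ => ?_
          rw [cm_smul z₀ r t θ, circleMap_zero]
          ring
        · congr 1
          push_cast
          ring
      rw [intervalIntegral.integral_congr hsplit, intervalIntegral.integral_add ?ic ?id]
      · rw [intervalIntegral.integral_const_mul, integral_exp_int 1 (by norm_num), mul_zero,
          add_zero, inner_II hψ z₀ hr]
      case ic =>
        apply Continuous.intervalIntegrable
        exact continuous_parametric_intervalIntegral_of_continuous' (by
          have := cm_cont z₀ r
          exact Continuous.mul (by fun_prop) (hψ.continuous.comp this)) 0 1
      case id =>
        apply Continuous.intervalIntegrable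
        fun_prop
    rw [hmain, map_zero]
  have hsplit2 : ∀ θ ∈ Set.uIcc (0:ℝ) (2 * Real.pi),
      ((Real.log ‖f (circleMap z₀ r θ)‖ : ℝ) : ℂ) * Complex.exp (-(θ * I))
        = (Fz (circleMap z₀ r θ) * Complex.exp (-(θ * I))
           + (starRingEnd ℂ) (Fz (circleMap z₀ r θ)) * Complex.exp (-(θ * I))) / 2 := by
    intro θ _
    rw [hlog]
    ring
  rw [intervalIntegral.integral_congr hsplit2]
  have hintA : IntervalIntegrable
      (fun θ : ℝ => Fz (circleMap z₀ r θ) * Complex.exp (-(θ * I))) volume 0 (2*Real.pi) := by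
    apply Continuous.intervalIntegrable
    fun_prop
  have hintB : IntervalIntegrable
      (fun θ : ℝ => (starRingEnd ℂ) (Fz (circleMap z₀ r θ)) * Complex.exp (-(θ * I)))
      volume 0 (2*Real.pi) := by
    apply Continuous.intervalIntegrable
    exact (Complex.continuous_conj.comp hcontA).mul (by fun_prop)
  rw [intervalIntegral.integral_div, intervalIntegral.integral_add hintA hintB, hIa, hIb,
    add_zero]
  push_cast
  ring


lemma iteratedDeriv_cmul {F : ℂ → ℂ} (hF : Differentiable ℂ F) (a : ℂ) :
    ∀ n : ℕ, iteratedDeriv n (fun w => a * F w) = fun z => a * iteratedDeriv n F z := by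
  intro n
  induction n generalizing F with
  | zero => simp
  | succ n ih =>
    rw [iteratedDeriv_succ', iteratedDeriv_succ']
    have hd : deriv (fun w => a * F w) = fun w => a * deriv F w :=
      funext fun w => deriv_const_mul a (hF w)
    rw [hd, ih ((contDiff_infty_iff_deriv.mp hF.contDiff).2.differentiable
      (by simp))]

section KeyLemma

variable {Ω : Type*} [MeasurableSpace Ω] {P : Measure Ω} [IsFiniteMeasure P]

lemma key_lemma {h x : Ω → ℂ} (hmh : Measurable h) (hh1 : ∀ ω, ‖h ω‖ ≤ 1)
    (hmx : Measurable x) {R : ℝ} (hR0 : 0 ≤ R) (hxR : ∀ᵐ ω ∂P, ‖x ω‖ ≤ R)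
    {c : ℂ} (hc : c ≠ 0) {α β : ℕ → ℂ} (hα0 : α 0 = 1) (hβ0 : β 0 = 1)
    (hmom : ∀ m n : ℕ, (∫ ω, x ω ^ m * (starRingEnd ℂ) (x ω) ^ n * h ω ∂P)
       = c * α m * β n) :
    α 2 = α 1 ^ 2 ∧ β 1 = (starRingEnd ℂ) (α 1) := by
  set xc : Ω → ℂ := fun ω => (starRingEnd ℂ) (x ω) with hxc
  have hmxc : Measurable xc := Complex.continuous_conj.measurable.comp hmx
  have hxcR : ∀ᵐ ω ∂P, ‖xc ω‖ ≤ R := hxR.mono fun ω h1 => by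
    rw [hxc]; rwa [RCLike.norm_conj]
  have hhb : ∀ᵐ ω ∂P, ‖h ω‖ ≤ 1 := Filter.Eventually.of_forall hh1
  -- bounds for h * x^m and h * xc^n
  have hbx : ∀ m : ℕ, ∀ᵐ ω ∂P, ‖h ω * x ω ^ m‖ ≤ R ^ m := fun m =>
    hxR.mono fun ω h1 => by
      rw [norm_mul, norm_pow]
      have := mul_le_mul (hh1 ω) (pow_le_pow_left₀ (norm_nonneg _) h1 m)
        (by positivity) zero_le_one
      simpa using this
  have hbxc : ∀ n : ℕ, ∀ᵐ ω ∂P, ‖h ω * xc ω ^ n‖ ≤ R ^ n := fun n =>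
    hxcR.mono fun ω h1 => by
      rw [norm_mul, norm_pow]
      have := mul_le_mul (hh1 ω) (pow_le_pow_left₀ (norm_nonneg _) h1 n)
        (by positivity) zero_le_one
      simpa using this
  -- moments in convenient form
  have hmom' : ∀ m n : ℕ, (∫ ω, (h ω * x ω ^ m) * xc ω ^ n ∂P) = c * α m * β n := by
    intro m n
    rw [← hmom m n]
    refine integral_congr_ae (Filter.Eventually.of_forall fun ω => ?_)
    simp only [hxc]
    ring
  have hTT0 : ∀ y ζ : Ω → ℂ, TT P y ζ 0 = ∫ ω, ζ ω ∂P := by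
    intro y ζ
    unfold TT
    simp
  -- Step A
  have stepA : ∀ m : ℕ, (TT P xc fun ω => h ω * x ω ^ m)
      = fun w => α m * TT P xc h w := by
    intro m
    have hbmix : ∀ᵐ ω ∂P, ‖h ω * x ω ^ m‖ ≤ R ^ m := hbx m
    refine entire_ext (TT_differentiable hmxc (hmh.mul (hmx.pow_const m)) hxcR hbmix)
      ((TT_differentiable hmxc hmh hxcR hhb).const_mul (α m)) fun n => ?_
    rw [TT_iteratedDeriv hmxc hxcR n (fun ω => h ω * x ω ^ m) _ (hmh.mul (hmx.pow_const m)) hbmix,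
      iteratedDeriv_cmul (TT_differentiable hmxc hmh hxcR hhb) (α m) n,
      TT_iteratedDeriv hmxc hxcR n _ _ hmh hhb]
    beta_reduce
    rw [hTT0, hTT0]
    have e1 : (∫ ω, (h ω * x ω ^ m) * xc ω ^ n ∂P) = c * α m * β n := hmom' m n
    have e2 : (∫ ω, h ω * xc ω ^ n ∂P) = c * β n := by
      have := hmom' 0 n
      rw [hα0] at this
      simpa using this
    rw [e1, e2]
    ring
  -- Step B
  have stepB : ∀ w v : ℂ, TT P x (fun ω => h ω * Complex.exp (w * xc ω)) v
      = (c⁻¹ * TT P xc h w) * TT P x h v := by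
    intro w v
    have hζm : Measurable fun ω => h ω * Complex.exp (w * xc ω) :=
      hmh.mul (measurable_const.mul hmxc).cexp
    have hζb : ∀ᵐ ω ∂P, ‖h ω * Complex.exp (w * xc ω)‖ ≤ 1 * Real.exp (‖w‖ * R) :=
      hxcR.mono fun ω h1 => key_bound (hh1 ω) h1 (le_refl ‖w‖)
    have := congrFun (entire_ext (TT_differentiable hmx hζm hxR hζb)
      ((TT_differentiable hmx hmh hxR hhb).const_mul (c⁻¹ * TT P xc h w)) fun m => ?_) v
    · exact this
    rw [TT_iteratedDeriv hmx hxR m _ _ hζm hζb,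
      iteratedDeriv_cmul (TT_differentiable hmx hmh hxR hhb) _ m,
      TT_iteratedDeriv hmx hxR m _ _ hmh hhb]
    beta_reduce
    rw [hTT0, hTT0]
    have e1 : (∫ ω, (h ω * Complex.exp (w * xc ω)) * x ω ^ m ∂P)
        = TT P xc (fun ω => h ω * x ω ^ m) w := by
      unfold TT
      refine integral_congr_ae (Filter.Eventually.of_forall fun ω => ?_)
      ring
    have e2 : (∫ ω, h ω * x ω ^ m ∂P) = c * α m := by
      have := hmom' m 0
      rw [hβ0] at this
      simpa using this
    rw [e1, e2, congrFun (stepA m) w]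
    have e3 : TT P xc h w = c * (c⁻¹ * TT P xc h w) := by
      field_simp
    rw [mul_comm (α m) (TT P xc h w), e3]
    field_simp
  set M₀ : ℝ := (P Set.univ).toReal with hM₀
  -- basic integrals
  have hTTnorm : ∀ y : Ω → ℂ, (∀ᵐ ω ∂P, ‖y ω‖ ≤ R) → ∀ v : ℂ,
      ‖TT P y h v‖ ≤ (M₀ : ℝ) * Real.exp (‖v‖ * R) := by
    intro y hyR v
    have := TT_norm_le (P := P) hyR hhb v
    calc ‖TT P y h v‖ ≤ 1 * Real.exp (‖v‖ * R) * (P Set.univ).toReal := this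
    _ = M₀ * Real.exp (‖v‖ * R) := by rw [hM₀]; ring
  have hint_h : (∫ ω, h ω ∂P) = c := by
    have := hmom' 0 0
    rw [hα0, hβ0] at this
    simpa using this
  set fn : ℂ → ℂ := fun v => c⁻¹ * TT P x h v with hfn
  set gn : ℂ → ℂ := fun w => c⁻¹ * TT P xc h w with hgn
  have hf_diff : Differentiable ℂ fn := (TT_differentiable hmx hmh hxR hhb).const_mul _
  have hg_diff : Differentiable ℂ gn := (TT_differentiable hmxc hmh hxcR hhb).const_mul _
  have hfn0 : fn 0 = 1 := by
    simp only [hfn, hTT0, hint_h]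
    exact inv_mul_cancel₀ hc
  have hgn0 : gn 0 = 1 := by
    simp only [hgn, hTT0, hint_h]
    exact inv_mul_cancel₀ hc
  -- product bound
  have hprod : ∀ w : ℂ, ‖fn ((starRingEnd ℂ) w) * gn (-w)‖ ≤ M₀ / ‖c‖ := by
    intro w
    have hb1 : ∀ ω, ‖(h ω * Complex.exp (-w * xc ω)) * Complex.exp ((starRingEnd ℂ) w * x ω)‖
        ≤ 1 := by
      intro ω
      rw [norm_mul, norm_mul, Complex.norm_exp, Complex.norm_exp, mul_assoc,
        ← Real.exp_add]
      have hre : (-w * xc ω).re + ((starRingEnd ℂ) w * x ω).re = 0 := by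
        have hz : -w * xc ω = -((starRingEnd ℂ) ((starRingEnd ℂ) w * x ω)) := by
          rw [map_mul, Complex.conj_conj, hxc]
          ring
        rw [hz]
        simp
      rw [hre, Real.exp_zero, mul_one]
      exact hh1 ω
    have heq : fn ((starRingEnd ℂ) w) * gn (-w)
        = c⁻¹ * TT P x (fun ω => h ω * Complex.exp (-w * xc ω)) ((starRingEnd ℂ) w) := by
      rw [stepB (-w) ((starRingEnd ℂ) w)]
      simp only [hfn, hgn]
      ring
    rw [heq, norm_mul, norm_inv]
    have hTb : ‖TT P x (fun ω => h ω * Complex.exp (-w * xc ω)) ((starRingEnd ℂ) w)‖ ≤ M₀ := by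
      have hnb := norm_integral_le_of_norm_le_const (μ := P) (C := 1)
        (f := fun ω => (h ω * Complex.exp (-w * xc ω)) * Complex.exp ((starRingEnd ℂ) w * x ω))
        (Filter.Eventually.of_forall hb1)
      calc ‖TT P x (fun ω => h ω * Complex.exp (-w * xc ω)) ((starRingEnd ℂ) w)‖
          ≤ 1 * (P Set.univ).toReal := hnb
      _ = M₀ := by rw [hM₀, one_mul]
    calc ‖c‖⁻¹ * ‖TT P x (fun ω => h ω * Complex.exp (-w * xc ω)) ((starRingEnd ℂ) w)‖
        ≤ ‖c‖⁻¹ * M₀ := mul_le_mul_of_nonneg_left hTb (by positivity)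
    _ = M₀ / ‖c‖ := by rw [div_eq_mul_inv]; ring
  -- the reflected function G
  set G : ℂ → ℂ := fun z => (starRingEnd ℂ) (gn (-((starRingEnd ℂ) z))) with hG
  have hG_deriv : ∀ z, HasDerivAt G
      (-((starRingEnd ℂ) (deriv gn (-((starRingEnd ℂ) z))))) z := fun z =>
    hasDerivAt_conj_comp ((hg_diff _).hasDerivAt)
  have hG_diff : Differentiable ℂ G := fun z => (hG_deriv z).differentiableAt
  have hG0 : G 0 = 1 := by
    simp only [hG, map_zero, neg_zero, hgn0, map_one]
  have hGnorm : ∀ z, ‖G z‖ = ‖gn (-((starRingEnd ℂ) z))‖ := fun z => RCLike.norm_conj _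
  -- Liouville I : fn * G = 1
  have hΨb : ∀ z, ‖fn z * G z‖ ≤ M₀ / ‖c‖ := by
    intro z
    rw [norm_mul, hGnorm, ← norm_mul]
    have := hprod ((starRingEnd ℂ) z)
    rwa [Complex.conj_conj] at this
  have hΨ1 : ∀ z, fn z * G z = 1 := by
    have hb : Bornology.IsBounded (Set.range fun z => fn z * G z) :=
      isBounded_iff_forall_norm_le.2 ⟨M₀ / ‖c‖, by rintro _ ⟨z, rfl⟩; exact hΨb z⟩
    intro z
    have := (hf_diff.mul hG_diff).apply_eq_apply_of_bounded hb z 0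
    rw [Pi.mul_apply, Pi.mul_apply] at this
    rw [this, hfn0, hG0, mul_one]
  have hfne : ∀ z, fn z ≠ 0 := by
    intro z h0
    have := hΨ1 z
    rw [h0, zero_mul] at this
    exact one_ne_zero this.symm
  -- derivative of fn
  have hbx1 : ∀ᵐ ω ∂P, ‖h ω * x ω‖ ≤ R := by
    have := hbx 1
    simpa using this
  have hbxc1 : ∀ᵐ ω ∂P, ‖h ω * xc ω‖ ≤ R := by
    have := hbxc 1
    simpa using this
  have hdf : deriv fn = fun v => c⁻¹ * TT P x (fun ω => h ω * x ω) v :=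
    funext fun v => ((TT_hasDerivAt hmx hmh hxR hhb v).const_mul c⁻¹).deriv
  have hdf_diff : Differentiable ℂ (deriv fn) := by
    rw [hdf]
    exact (TT_differentiable hmx (hmh.mul hmx) hxR hbx1).const_mul _
  set ψ : ℂ → ℂ := fun z => deriv fn z * G z with hψdef
  have hψ_diff : Differentiable ℂ ψ := hdf_diff.mul hG_diff
  have hfψ : ∀ z, deriv fn z = ψ z * fn z := by
    intro z
    simp only [hψdef]
    calc deriv fn z = deriv fn z * (fn z * G z) := by rw [hΨ1 z, mul_one]
    _ = deriv fn z * G z * fn z := by ring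
  -- growth bounds
  set D : ℝ := max (M₀ / ‖c‖) 1 with hD
  have hD1 : (1:ℝ) ≤ D := le_max_right _ _
  have hDpos : (0:ℝ) < D := lt_of_lt_of_le one_pos hD1
  have hfub : ∀ z, ‖fn z‖ ≤ D * Real.exp (‖z‖ * R) := by
    intro z
    simp only [hfn]
    rw [norm_mul, norm_inv]
    calc ‖c‖⁻¹ * ‖TT P x h z‖ ≤ ‖c‖⁻¹ * (M₀ * Real.exp (‖z‖ * R)) :=
      mul_le_mul_of_nonneg_left (hTTnorm x hxR z) (by positivity)
    _ = (M₀ / ‖c‖) * Real.exp (‖z‖ * R) := by rw [div_eq_mul_inv]; ring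
    _ ≤ D * Real.exp (‖z‖ * R) :=
      mul_le_mul_of_nonneg_right (le_max_left _ _) (Real.exp_pos _).le
  have hGub : ∀ z, ‖G z‖ ≤ D * Real.exp (‖z‖ * R) := by
    intro z
    rw [hGnorm]
    have hnn : ‖-((starRingEnd ℂ) z)‖ = ‖z‖ := by rw [norm_neg, RCLike.norm_conj]
    simp only [hgn]
    rw [norm_mul, norm_inv]
    calc ‖c‖⁻¹ * ‖TT P xc h (-((starRingEnd ℂ) z))‖
        ≤ ‖c‖⁻¹ * (M₀ * Real.exp (‖-((starRingEnd ℂ) z)‖ * R)) :=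
      mul_le_mul_of_nonneg_left (hTTnorm xc hxcR _) (by positivity)
    _ = (M₀ / ‖c‖) * Real.exp (‖z‖ * R) := by rw [hnn, div_eq_mul_inv]; ring
    _ ≤ D * Real.exp (‖z‖ * R) :=
      mul_le_mul_of_nonneg_right (le_max_left _ _) (Real.exp_pos _).le
  have hflb : ∀ z, (D * Real.exp (‖z‖ * R))⁻¹ ≤ ‖fn z‖ := by
    intro z
    have h1 : ‖fn z‖ * ‖G z‖ = 1 := by rw [← norm_mul, hΨ1 z, norm_one]
    have h2 : (0:ℝ) < ‖fn z‖ := norm_pos_iff.2 (hfne z)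
    have hDe : (0:ℝ) < D * Real.exp (‖z‖ * R) := by positivity
    have h3 : (1:ℝ) ≤ ‖fn z‖ * (D * Real.exp (‖z‖ * R)) := by
      rw [← h1]
      exact mul_le_mul_of_nonneg_left (hGub z) h2.le
    rw [inv_eq_one_div, div_le_iff₀ hDe]
    linarith
  have hlog : ∀ z, |Real.log ‖fn z‖| ≤ Real.log D + ‖z‖ * R := by
    intro z
    have h2 : (0:ℝ) < ‖fn z‖ := norm_pos_iff.2 (hfne z)
    have hDe : (0:ℝ) < D * Real.exp (‖z‖ * R) := by positivity
    rw [abs_le]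
    constructor
    · have hmono := Real.log_le_log (by positivity) (hflb z)
      rw [Real.log_inv, Real.log_mul (ne_of_gt hDpos) (Real.exp_ne_zero _),
        Real.log_exp] at hmono
      linarith
    · have hmono := Real.log_le_log h2 (hfub z)
      rw [Real.log_mul (ne_of_gt hDpos) (Real.exp_ne_zero _), Real.log_exp] at hmono
      linarith
  -- bound for psi via the averaged logarithm
  have hψb : ∀ z₀, ‖ψ z₀‖ ≤ 2 * R := by
    intro z₀
    set A : ℝ := Real.log D + ‖z₀‖ * R with hA
    have hA0 : 0 ≤ A := by
      have := Real.log_nonneg hD1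
      have : (0:ℝ) ≤ ‖z₀‖ * R := by positivity
      positivity
    have hkey : ∀ r : ℝ, 0 < r → ‖ψ z₀‖ ≤ 2 * A / r + 2 * R := by
      intro r hr
      have havg := average_rep hf_diff hψ_diff hfne hfψ z₀ hr
      have hbound : ‖(Real.pi : ℂ) * (r:ℂ) * ψ z₀‖ ≤ (A + r * R) * |2 * Real.pi - 0| := by
        rw [← havg]
        refine intervalIntegral.norm_integral_le_of_norm_le_const fun θ hθ => ?_
        rw [norm_mul]
        have he : ‖Complex.exp (-((θ:ℂ) * I))‖ = 1 := by
          rw [Complex.norm_exp]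
          simp
        rw [he, mul_one, Complex.norm_real, Real.norm_eq_abs]
        have hcm : ‖circleMap z₀ r θ‖ ≤ ‖z₀‖ + r := by
          have : circleMap z₀ r θ = z₀ + circleMap 0 r θ := by
            simp [circleMap]
          rw [this]
          refine (norm_add_le _ _).trans ?_
          have : ‖circleMap 0 r θ‖ = |r| := by
            rw [norm_circleMap_zero]
          rw [this, abs_of_pos hr]
        calc |Real.log ‖fn (circleMap z₀ r θ)‖| ≤ Real.log D + ‖circleMap z₀ r θ‖ * R :=
          hlog _
        _ ≤ Real.log D + (‖z₀‖ + r) * R := by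
          have := mul_le_mul_of_nonneg_right hcm hR0
          linarith
        _ = A + r * R := by rw [hA]; ring
      have hπ := Real.pi_pos
      have hnorm1 : ‖(Real.pi : ℂ) * (r:ℂ) * ψ z₀‖ = Real.pi * r * ‖ψ z₀‖ := by
        rw [norm_mul, norm_mul, Complex.norm_real, Complex.norm_real, Real.norm_eq_abs,
          Real.norm_eq_abs, abs_of_pos hπ, abs_of_pos hr]
      rw [hnorm1] at hbound
      have habs : |2 * Real.pi - 0| = 2 * Real.pi := by
        rw [sub_zero, abs_of_pos (by linarith)]
      rw [habs] at hbound
      -- bound : π r ‖ψ‖ ≤ (A + r R) * 2π ; conclude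
      rw [div_add' _ _ _ hr.ne']
      rw [le_div_iff₀ hr]
      nlinarith [hbound]
    have htend : Filter.Tendsto (fun r : ℝ => 2 * A / r + 2 * R)
        Filter.atTop (nhds (2 * R)) := by
      have h0 : Filter.Tendsto (fun r : ℝ => 2 * A / r) Filter.atTop (nhds 0) := by
        simp_rw [div_eq_mul_inv]
        simpa using tendsto_inv_atTop_zero.const_mul (2 * A)
      simpa using h0.add tendsto_const_nhds
    exact ge_of_tendsto htend
      (by filter_upwards [Filter.eventually_gt_atTop 0] with r hr using hkey r hr)
  -- Liouville II : psi is constant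
  have hψconst : ∀ z, ψ z = ψ 0 := fun z =>
    hψ_diff.apply_eq_apply_of_bounded
      (isBounded_iff_forall_norm_le.2 ⟨2 * R, by rintro _ ⟨z, rfl⟩; exact hψb z⟩) z 0
  have hintx1 : (∫ ω, h ω * x ω ∂P) = c * α 1 := by
    have := hmom' 1 0
    rw [hβ0] at this
    simpa using this
  have hderiv0 : deriv fn 0 = α 1 := by
    rw [hdf]
    simp only [hTT0, hintx1]
    field_simp
  have hψ0 : ψ 0 = α 1 := by
    simp only [hψdef]
    rw [hderiv0, hG0, mul_one]
  -- alpha 2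
  have hiter2 : iteratedDeriv 2 fn 0 = α 2 := by
    rw [hfn, iteratedDeriv_cmul (TT_differentiable hmx hmh hxR hhb) c⁻¹ 2,
      TT_iteratedDeriv hmx hxR 2 _ _ hmh hhb]
    beta_reduce
    rw [hTT0]
    have : (∫ ω, h ω * x ω ^ 2 ∂P) = c * α 2 := by
      have := hmom' 2 0
      rw [hβ0] at this
      simpa using this
    rw [this]
    field_simp
  have hd2 : iteratedDeriv 2 fn 0 = α 1 * α 1 := by
    have hdf_eq : deriv fn = fun z => α 1 * fn z := funext fun z => by
      rw [hfψ z, hψconst z, hψ0]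
    rw [iteratedDeriv_succ, iteratedDeriv_one, hdf_eq]
    rw [deriv_const_mul _ (hf_diff 0), hderiv0]
  refine ⟨by rw [← hiter2, hd2, sq], ?_⟩
  -- beta 1
  have hΨfun : (fun z => fn z * G z) = fun _ => (1:ℂ) := funext fun z => hΨ1 z
  have hdΨ : deriv (fun z => fn z * G z) 0 = 0 := by rw [hΨfun]; simp
  have hdΨ' : deriv (fun z => fn z * G z) 0 = deriv fn 0 * G 0 + fn 0 * deriv G 0 :=
    deriv_mul (hf_diff 0) (hG_diff 0)
  have hdG0 : deriv G 0 = -((starRingEnd ℂ) (deriv gn 0)) := by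
    have := (hG_deriv 0).deriv
    simpa using this
  have hintxc1 : (∫ ω, h ω * xc ω ∂P) = c * β 1 := by
    have := hmom' 0 1
    rw [hα0] at this
    simpa using this
  have hdg0 : deriv gn 0 = β 1 := by
    have hdg : deriv gn = fun w => c⁻¹ * TT P xc (fun ω => h ω * xc ω) w :=
      funext fun w => ((TT_hasDerivAt hmxc hmh hxcR hhb w).const_mul c⁻¹).deriv
    rw [hdg]
    simp only [hTT0, hintxc1]
    field_simp
  have hsum : α 1 * 1 + 1 * -((starRingEnd ℂ) (β 1)) = 0 := by
    have h9 := hdΨ'.symm.trans hdΨ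
    rw [hderiv0, hG0, hfn0, hdG0, hdg0] at h9
    exact h9
  have hβ1 : (starRingEnd ℂ) (β 1) = α 1 := by
    have : α 1 - (starRingEnd ℂ) (β 1) = 0 := by linear_combination hsum
    exact (sub_eq_zero.mp this).symm
  rw [← hβ1, Complex.conj_conj]

end KeyLemma

section Outer

variable {S : Type*} [CommMonoid S]

lemma mc_one (ρ : MultChar S) : ρ.1 1 = 1 := by
  have h1 : ρ.1 1 * ρ.1 1 = ρ.1 1 := by
    rw [← ρ.2.1 1 1, one_mul]
  by_contra hne1
  have h0 : ρ.1 1 = 0 := by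
    rcases mul_eq_zero.mp (show ρ.1 1 * (ρ.1 1 - 1) = 0 by ring_nf; linear_combination h1) with
      hh | hh
    · exact hh
    · exact absurd (by linear_combination hh) hne1
  refine ρ.2.2 (funext fun s => ?_)
  have := ρ.2.1 s 1
  rw [mul_one] at this
  rw [Pi.zero_apply, this, h0, mul_zero]

lemma mc_pow (ρ : MultChar S) (σ : S) (m : ℕ) : ρ.1 (σ ^ m) = ρ.1 σ ^ m := by
  induction m with
  | zero => simpa using mc_one ρ
  | succ n ih => rw [pow_succ, pow_succ, ρ.2.1, ih]

lemma mc_meas (σ : S) : Measurable fun ρ : MultChar S => ρ.1 σ :=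
  (measurable_pi_apply σ).comp measurable_subtype_coe

end Outer

lemma double_sum_factor {m n : ℕ} (c : ℂ) (A B Ca Cb : ℕ → ℂ) :
    (∑ j ∈ Finset.range (m+1), ∑ l ∈ Finset.range (n+1),
        (Ca j * Cb l) * (c * A j * B l))
      = c * (∑ j ∈ Finset.range (m+1), Ca j * A j)
          * (∑ l ∈ Finset.range (n+1), Cb l * B l) := by
  rw [mul_assoc, Finset.sum_mul_sum, Finset.mul_sum]
  refine Finset.sum_congr rfl fun j _ => ?_
  rw [Finset.mul_sum]
  exact Finset.sum_congr rfl fun l _ => by ring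

end Maserick

open Maserick

/-- Maserick-type rigidity: if the generalized Laplace transform `f` of a
compactly supported complex measure `h • P` on `S'` satisfies
`f(e,e) ≠ 0` and `f(e,e)·f(s,t) = f(s,e)·f(e,t)`, then
`f(s,t) = c·γ(s)·conj(γ(t))` for some `c ≠ 0` and some `γ ∈ S'`. -/
theorem stmt_8 {S : Type*} [CommMonoid S]
    (P : Measure (MultChar S)) [IsFiniteMeasure P]
    (h : MultChar S → ℂ) (hmeas : Measurable h) (hnorm : ∀ ρ, ‖h ρ‖ = 1)
    (hsupp : ∃ K : Set (MultChar S), IsCompact K ∧ P Kᶜ = 0)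
    (f : S × S → ℂ)
    (hf : ∀ s t : S, f (s, t) = ∫ ρ, ρ.1 s * (starRingEnd ℂ) (ρ.1 t) * h ρ ∂P)
    (h1 : f (1, 1) ≠ 0)
    (heq : ∀ s t : S, f (1, 1) * f (s, t) = f (s, 1) * f (1, t)) :
    ∃ (c : ℂ) (γ : MultChar S), c ≠ 0 ∧
      ∀ s t : S, f (s, t) = c * γ.1 s * (starRingEnd ℂ) (γ.1 t) := by
  classical
  obtain ⟨K, hK, hPK⟩ := hsupp
  have haeK : ∀ᵐ ρ ∂P, ρ ∈ K := by
    rw [Filter.eventually_iff, MeasureTheory.mem_ae_iff]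
    simpa [Set.setOf_mem_eq] using hPK
  set c : ℂ := f (1, 1) with hcdef
  have hc : c ≠ 0 := h1
  set mm : S → S → ℂ :=
    fun σ τ => ∫ ρ, ρ.1 σ * (starRingEnd ℂ) (ρ.1 τ) * h ρ ∂P with hmmdef
  have hfmm : ∀ σ τ : S, f (σ, τ) = mm σ τ := fun σ τ => hf σ τ
  have hc11 : mm 1 1 = c := (hfmm 1 1).symm
  set a : S → ℂ := fun σ => c⁻¹ * mm σ 1 with hadef
  set b : S → ℂ := fun τ => c⁻¹ * mm 1 τ with hbdef
  have hrank : ∀ σ τ : S, mm σ τ = c * a σ * b τ := by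
    intro σ τ
    have h' := heq σ τ
    rw [hfmm σ τ, hfmm σ 1, hfmm 1 τ] at h'
    simp only [hadef, hbdef]
    field_simp
    linear_combination h'
  have ha1 : a 1 = 1 := by
    simp only [hadef, hc11]
    exact inv_mul_cancel₀ hc
  have hb1 : b 1 = 1 := by
    simp only [hbdef, hc11]
    exact inv_mul_cancel₀ hc
  have hbound : ∀ σ : S, ∃ R : ℝ, 0 ≤ R ∧ ∀ᵐ ρ ∂P, ‖ρ.1 σ‖ ≤ R := by
    intro σ
    have hcont : Continuous fun ρ : MultChar S => ρ.1 σ :=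
      (continuous_apply σ).comp continuous_subtype_val
    obtain ⟨R, hR⟩ := hK.exists_bound_of_continuousOn hcont.continuousOn
    refine ⟨max R 0, le_max_right _ _, ?_⟩
    filter_upwards [haeK] with ρ hρ
    exact (hR ρ hρ).trans (le_max_left R 0)
  have hintg : ∀ σ τ : S,
      Integrable (fun ρ : MultChar S => ρ.1 σ * (starRingEnd ℂ) (ρ.1 τ) * h ρ) P := by
    intro σ τ
    obtain ⟨R1, hR10, hR1⟩ := hbound σ
    obtain ⟨R2, hR20, hR2⟩ := hbound τ
    refine integrable_bdd (C := R1 * R2) ?_ ?_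
    · exact (((mc_meas σ).mul
        ((Complex.continuous_conj.measurable).comp (mc_meas τ))).mul hmeas).aestronglyMeasurable
    · filter_upwards [hR1, hR2] with ρ k1 k2
      rw [norm_mul, norm_mul, RCLike.norm_conj, hnorm ρ, mul_one]
      exact mul_le_mul k1 k2 (norm_nonneg _) hR10
  -- single-element consequences
  have hsingle : ∀ σ : S, a (σ^2) = a σ ^ 2 ∧ b σ = (starRingEnd ℂ) (a σ) := by
    intro σ
    obtain ⟨R, hR0, hRa⟩ := hbound σ
    have hmomσ : ∀ m n : ℕ,
        (∫ ρ, (ρ.1 σ) ^ m * (starRingEnd ℂ) (ρ.1 σ) ^ n * h ρ ∂P)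
          = c * (fun m => a (σ^m)) m * (fun n => b (σ^n)) n := by
      intro m n
      have hcongr : ∀ ρ : MultChar S,
          (ρ.1 σ) ^ m * (starRingEnd ℂ) (ρ.1 σ) ^ n * h ρ
            = ρ.1 (σ^m) * (starRingEnd ℂ) (ρ.1 (σ^n)) * h ρ := by
        intro ρ
        rw [mc_pow, mc_pow, map_pow]
      rw [integral_congr_ae (Filter.Eventually.of_forall hcongr)]
      exact hrank (σ^m) (σ^n)
    have hα0 : (fun m => a (σ^m)) 0 = 1 := by simpa using ha1
    have hβ0 : (fun n => b (σ^n)) 0 = 1 := by simpa using hb1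
    have hKL := key_lemma hmeas (fun ρ => le_of_eq (hnorm ρ)) (mc_meas σ) hR0 hRa hc
      hα0 hβ0 hmomσ
    constructor
    · simpa using hKL.1
    · simpa using hKL.2
  -- pairwise multiplicativity
  have hmult : ∀ σ τ : S, a (σ * τ) = a σ * a τ := by
    intro σ τ
    obtain ⟨R1, hR10, hR1⟩ := hbound σ
    obtain ⟨R2, hR20, hR2⟩ := hbound τ
    have hmx : Measurable fun ρ : MultChar S => ρ.1 σ + ρ.1 τ :=
      (mc_meas σ).add (mc_meas τ)
    have hxb : ∀ᵐ ρ ∂P, ‖ρ.1 σ + ρ.1 τ‖ ≤ R1 + R2 := by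
      filter_upwards [hR1, hR2] with ρ k1 k2
      exact (norm_add_le _ _).trans (add_le_add k1 k2)
    set α : ℕ → ℂ :=
      fun m => ∑ j ∈ Finset.range (m+1), (m.choose j : ℂ) * a (σ^j * τ^(m-j)) with hαdef
    set β : ℕ → ℂ :=
      fun n => ∑ l ∈ Finset.range (n+1), (n.choose l : ℂ) * b (σ^l * τ^(n-l)) with hβdef
    have hmomp : ∀ m n : ℕ,
        (∫ ρ, (ρ.1 σ + ρ.1 τ) ^ m * (starRingEnd ℂ) (ρ.1 σ + ρ.1 τ) ^ n * h ρ ∂P)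
          = c * α m * β n := by
      intro m n
      have hpoint : ∀ ρ : MultChar S,
          (ρ.1 σ + ρ.1 τ) ^ m * (starRingEnd ℂ) (ρ.1 σ + ρ.1 τ) ^ n * h ρ
            = ∑ j ∈ Finset.range (m+1), ∑ l ∈ Finset.range (n+1),
                (((m.choose j : ℂ)) * ((n.choose l : ℂ))) *
                  (ρ.1 (σ^j * τ^(m-j)) * (starRingEnd ℂ) (ρ.1 (σ^l * τ^(n-l))) * h ρ) := by
        intro ρ
        have e1 : (ρ.1 σ + ρ.1 τ) ^ m
            = ∑ j ∈ Finset.range (m+1), ρ.1 (σ^j * τ^(m-j)) * (m.choose j : ℂ) := by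
          rw [add_pow]
          refine Finset.sum_congr rfl fun j _ => ?_
          rw [ρ.2.1, mc_pow, mc_pow]
        have e2 : (starRingEnd ℂ) (ρ.1 σ + ρ.1 τ) ^ n
            = ∑ l ∈ Finset.range (n+1),
                (starRingEnd ℂ) (ρ.1 (σ^l * τ^(n-l))) * (n.choose l : ℂ) := by
          rw [← map_pow, add_pow, map_sum]
          refine Finset.sum_congr rfl fun l _ => ?_
          rw [map_mul, map_natCast]
          congr 2
          rw [ρ.2.1, mc_pow, mc_pow]
        rw [e1, e2, Finset.sum_mul_sum, Finset.sum_mul]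
        refine Finset.sum_congr rfl fun j _ => ?_
        rw [Finset.sum_mul]
        exact Finset.sum_congr rfl fun l _ => by ring
      rw [integral_congr_ae (Filter.Eventually.of_forall hpoint)]
      rw [integral_finset_sum _ (fun j _ =>
        integrable_finset_sum _ (fun l _ => (hintg _ _).const_mul _))]
      have hterm : ∀ j ∈ Finset.range (m+1),
          (∫ ρ, ∑ l ∈ Finset.range (n+1),
              (((m.choose j : ℂ)) * ((n.choose l : ℂ))) *
                (ρ.1 (σ^j * τ^(m-j)) * (starRingEnd ℂ) (ρ.1 (σ^l * τ^(n-l))) * h ρ) ∂P)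
            = ∑ l ∈ Finset.range (n+1),
                (((m.choose j : ℂ)) * ((n.choose l : ℂ)))
                  * (c * a (σ^j * τ^(m-j)) * b (σ^l * τ^(n-l))) := by
        intro j _
        rw [integral_finset_sum _ (fun l _ => (hintg _ _).const_mul _)]
        refine Finset.sum_congr rfl fun l _ => ?_
        rw [MeasureTheory.integral_const_mul]
        congr 1
        exact hrank (σ^j * τ^(m-j)) (σ^l * τ^(n-l))
      rw [Finset.sum_congr rfl hterm, hαdef, hβdef]
      exact double_sum_factor c (fun j => a (σ^j * τ^(m-j))) (fun l => b (σ^l * τ^(n-l)))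
        (fun j => (m.choose j : ℂ)) (fun l => (n.choose l : ℂ))
    have hα0 : α 0 = 1 := by
      simp [hαdef, ha1]
    have hβ0 : β 0 = 1 := by
      simp [hβdef, hb1]
    have hKL := key_lemma hmeas (fun ρ => le_of_eq (hnorm ρ)) hmx (by positivity) hxb hc
      hα0 hβ0 hmomp
    have hα2 := hKL.1
    simp only [hαdef] at hα2
    rw [Finset.sum_range_succ, Finset.sum_range_succ, Finset.sum_range_one,
      Finset.sum_range_succ, Finset.sum_range_one] at hα2
    norm_num at hα2
    -- hα2 should now relate a(τ^2), a(σ*τ), a(σ^2), a τ, a σ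
    have h2σ := (hsingle σ).1
    have h2τ := (hsingle τ).1
    -- also powers: σ^1 = σ etc handled by norm_num/simp; conclude
    linear_combination (hα2 - h2σ - h2τ) / 2
  have hane : (a : S → ℂ) ≠ 0 := by
    intro h0
    have : a 1 = 0 := by rw [h0]; rfl
    rw [ha1] at this
    exact one_ne_zero this
  refine ⟨c, ⟨a, hmult, hane⟩, hc, fun s t => ?_⟩
  rw [hfmm s t, hrank s t, (hsingle t).2]
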